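/- Let {y_k, w_k} be the sequences generated by the GFDPG method. Then for any k ≥ 1 with Σ_{i=0}^{k−1} (T_i − t_i²) > 0, min_{1≤i≤k} ‖y_i − w_{i−1}‖ ≤ ‖y_0 − y_*‖ / √( Σ_{i=0}^{k−1} (T_i − t_i²) ). -/

import Mathlib

open scoped RealInnerProductSpace

lemma convex_grad_ineq {V : Type*} [NormedAddCommGroup V] [InnerProductSpace ℝ V]
    [CompleteSpace V]
    {F : V → ℝ} {F' : V → V} (hF : ConvexOn ℝ Set.univ F)
    (hF' : ∀ y, HasGradientAt F (F' y) y) (w x : V) :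
    F w + ⟪x - w, F' w⟫ ≤ F x := by
  set g : ℝ → ℝ := fun l => F (w + l • (x - w)) with hg
  have hc : HasDerivAt (fun l : ℝ => w + l • (x - w)) (x - w) 0 := by
    simpa using ((hasDerivAt_id (0:ℝ)).smul_const (x - w)).const_add w
  have hd : HasDerivAt g ⟪x - w, F' w⟫ 0 := by
    have h1 := (hF' w).hasFDerivAt
    have h2 := (show HasFDerivAt F ((InnerProductSpace.toDual ℝ V) (F' w)) (w + (0:ℝ) • (x - w))
      by simpa using h1).comp_hasDerivAt (0:ℝ) hc
    have h3 : HasDerivAt g ((InnerProductSpace.toDual ℝ V) (F' w) (x - w)) 0 := h2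
    simpa [real_inner_comm] using h3
  have hslope : ∀ l : ℝ, l ∈ Set.Ioo (0:ℝ) 1 → slope g 0 l ≤ F x - F w := by
    intro l hl
    have hconv := hF.2 (Set.mem_univ w) (Set.mem_univ x)
      (by linarith [hl.2] : (0:ℝ) ≤ 1 - l) (le_of_lt hl.1) (by ring)
    have hpt : (1 - l) • w + l • x = w + l • (x - w) := by module
    rw [hpt] at hconv
    have h3 : g l ≤ (1 - l) * F w + l * F x := by simpa [hg] using hconv
    have hg0 : g 0 = F w := by simp [hg]
    rw [slope_def_field, hg0, sub_zero, div_le_iff₀ hl.1]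
    nlinarith [hl.1]
  have htend : Filter.Tendsto (slope g 0) (nhdsWithin 0 (Set.Ioi 0)) (nhds ⟪x - w, F' w⟫) := by
    have := hasDerivAt_iff_tendsto_slope.mp hd
    exact this.mono_left (nhdsWithin_mono _ (fun z hz => ne_of_gt hz))
  have hle : ⟪x - w, F' w⟫ ≤ F x - F w := by
    refine le_of_tendsto htend ?_
    filter_upwards [Ioo_mem_nhdsGT_of_mem (Set.mem_Ico.mpr ⟨le_refl 0, zero_lt_one⟩)] with l hl
    exact hslope l hl
  linarith

lemma prox_subgrad {V : Type*} [NormedAddCommGroup V] [InnerProductSpace ℝ V]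
    {F G : V → ℝ} {F' : V → V} (hG : ConvexOn ℝ Set.univ G)
    {L : ℝ} {w p : V}
    (hmin : IsMinOn (fun y => F w + ⟪y - w, F' w⟫ + L / 2 * ‖y - w‖^2 + G y) Set.univ p)
    (x : V) :
    0 ≤ ⟪x - p, F' w⟫ + L * ⟪x - p, p - w⟫ + G x - G p := by
  by_contra hneg
  push_neg at hneg
  set A : ℝ := ⟪x - p, F' w⟫ + L * ⟪x - p, p - w⟫ + G x - G p with hA
  set B : ℝ := |L| / 2 * ‖x - p‖^2 with hB
  have hBnn : 0 ≤ B := by positivity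
  set l : ℝ := min 1 (-A / (2 * (B + 1))) with hl
  have hlpos : 0 < l := lt_min one_pos (div_pos (neg_pos.mpr hneg) (by linarith))
  have hl1 : l ≤ 1 := min_le_left _ _
  have key : 0 ≤ l * A + l ^ 2 * (L / 2 * ‖x - p‖^2) := by
    have hm := hmin (Set.mem_univ (p + l • (x - p)))
    simp only [Set.mem_setOf_eq] at hm
    have hGc : G (p + l • (x - p)) ≤ (1 - l) * G p + l * G x := by
      have := hG.2 (Set.mem_univ p) (Set.mem_univ x) (by linarith : (0:ℝ) ≤ 1 - l)
        (le_of_lt hlpos) (by ring)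
      have hpt : (1 - l) • p + l • x = p + l • (x - p) := by module
      rw [hpt] at this
      simpa using this
    have hinner : ⟪p + l • (x - p) - w, F' w⟫ = ⟪p - w, F' w⟫ + l * ⟪x - p, F' w⟫ := by
      have : p + l • (x - p) - w = (p - w) + l • (x - p) := by abel
      rw [this, inner_add_left, real_inner_smul_left]
    have hnorm : ‖p + l • (x - p) - w‖^2 = ‖p - w‖^2 + 2 * l * ⟪x - p, p - w⟫
        + l^2 * ‖x - p‖^2 := by
      have h1 : p + l • (x - p) - w = (p - w) + l • (x - p) := by abel
      rw [h1, norm_add_sq_real, real_inner_smul_right, norm_smul, real_inner_comm]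
      simp [Real.norm_eq_abs, mul_pow, sq_abs]
      ring
    rw [hinner, hnorm] at hm
    nlinarith [hm, hGc]
  have hlB : l * B ≤ -A / 2 := by
    have h2 : l ≤ -A / (2 * (B + 1)) := min_le_right _ _
    have h3 : l * (B + 1) ≤ -A / 2 := by
      calc l * (B + 1) ≤ (-A / (2 * (B + 1))) * (B + 1) := by nlinarith
      _ = -A / 2 := by field_simp
    nlinarith
  have habs : l * (L / 2 * ‖x - p‖^2) ≤ l * B := by
    have : L / 2 * ‖x - p‖^2 ≤ B := by
      rw [hB]
      have : L ≤ |L| := le_abs_self L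
      nlinarith [sq_nonneg ‖x - p‖]
    nlinarith
  have h4 : 0 ≤ l * A + l * (l * (L / 2 * ‖x - p‖^2)) := by nlinarith [key]
  have h5 : l * (l * (L / 2 * ‖x - p‖^2)) ≤ l * (-A / 2) :=
    mul_le_mul_of_nonneg_left (le_trans habs hlB) (le_of_lt hlpos)
  nlinarith [mul_pos hlpos (neg_pos.mpr hneg)]

lemma prox_ineq {V : Type*} [NormedAddCommGroup V] [InnerProductSpace ℝ V]
    [CompleteSpace V]
    {F G : V → ℝ} {F' : V → V} (hF : ConvexOn ℝ Set.univ F)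
    (hF' : ∀ y, HasGradientAt F (F' y) y) (hG : ConvexOn ℝ Set.univ G)
    {L : ℝ} {w p : V}
    (hmin : IsMinOn (fun y => F w + ⟪y - w, F' w⟫ + L / 2 * ‖y - w‖^2 + G y) Set.univ p)
    (hdesc : F p + G p ≤ F w + ⟪p - w, F' w⟫ + L / 2 * ‖p - w‖^2 + G p)
    (x : V) :
    L / 2 * ‖p - w‖^2 + L * ⟪w - x, p - w⟫ ≤ (F x + G x) - (F p + G p) := by
  have h1 := convex_grad_ineq hF hF' w x
  have h2 := prox_subgrad hG hmin x
  have e1 : ⟪x - p, F' w⟫ = ⟪x - w, F' w⟫ - ⟪p - w, F' w⟫ := by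
    rw [show x - p = (x - w) - (p - w) by abel, inner_sub_left]
  have e2 : ⟪x - p, p - w⟫ = -⟪w - x, p - w⟫ - ‖p - w‖^2 := by
    rw [show x - p = -(w - x) - (p - w) by abel, inner_sub_left, inner_neg_left,
      real_inner_self_eq_norm_sq]
  rw [e1, e2] at h2
  nlinarith [h2, h1, hdesc]


/-- For the GFDPG sequences, for any `k ≥ 1` with `Σ_{i=0}^{k−1} (T_i − t_i²) > 0`,
`min_{1≤i≤k} ‖y_i − w_{i−1}‖ ≤ ‖y_0 − y_*‖ / √( Σ_{i=0}^{k−1} (T_i − t_i²) )`. -/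
theorem gfdpg_inner_norm_bound
    {V : Type*} [NormedAddCommGroup V] [InnerProductSpace ℝ V] [FiniteDimensional ℝ V]
    (F G : V → ℝ) (LF : ℝ)
    (hF : ConvexOn ℝ Set.univ F) (hG : ConvexOn ℝ Set.univ G)
    (F' : V → V) (hF' : ∀ y, HasGradientAt F (F' y) y)
    (hLip : ∀ y w : V, ‖F' y - F' w‖ ≤ LF * ‖y - w‖)
    -- q̃ := F + G attains its minimum at y_*
    (ystar : V) (hystar : ∀ y, F ystar + G ystar ≤ F y + G y)
    -- p_L(w) : the unique minimizer over y of Q_L(y, w)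
    (P : ℝ → V → V)
    (hP : ∀ L, 0 < L → ∀ w, IsMinOn
      (fun y => F w + ⟪y - w, F' w⟫ + L / 2 * ‖y - w‖^2 + G y) Set.univ (P L w))
    -- the GFDPG method
    (y w : ℕ → V) (t T Lk : ℕ → ℝ)
    (hw0 : w 0 = y 0) (hL0 : 0 < Lk 0)
    (ht0 : t 0 = T 0) (ht0pos : 0 < t 0) (ht0le : t 0 ≤ 1)
    (hT : ∀ k : ℕ, T k = ∑ i ∈ Finset.range (k+1), t i)
    (hLmono : ∀ k : ℕ, Lk k ≤ Lk (k+1))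
    (hdesc : ∀ k : ℕ,
      F (P (Lk (k+1)) (w k)) + G (P (Lk (k+1)) (w k)) ≤
        F (w k) + ⟪P (Lk (k+1)) (w k) - w k, F' (w k)⟫
          + Lk (k+1) / 2 * ‖P (Lk (k+1)) (w k) - w k‖^2 + G (P (Lk (k+1)) (w k)))
    (hy : ∀ k : ℕ, y (k+1) = P (Lk (k+1)) (w k))
    (htpos : ∀ k : ℕ, 0 < t (k+1)) (htsq : ∀ k : ℕ, t (k+1) ^ 2 ≤ T (k+1))
    (hw : ∀ k : ℕ, w (k+1) = y (k+1)
      + (((T k - t k) * t (k+1)) / (t k * T (k+1))) • (y (k+1) - y k)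
      + (((t k ^ 2 - T k) * t (k+1)) / (t k * T (k+1))) • (y (k+1) - w k))
    (k : ℕ) (hk : 1 ≤ k)
    (hsum : 0 < ∑ i ∈ Finset.range k, (T i - t i ^ 2)) :
    (Finset.Icc 1 k).inf' (Finset.nonempty_Icc.mpr hk) (fun i => ‖y i - w (i-1)‖)
      ≤ ‖y 0 - ystar‖ / Real.sqrt (∑ i ∈ Finset.range k, (T i - t i ^ 2)) := by
  have htpos' : ∀ i : ℕ, 0 < t i := by
    intro i
    cases i with
    | zero => exact ht0pos
    | succ n => exact htpos n
  have hTsucc : ∀ i : ℕ, T (i+1) = T i + t (i+1) := by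
    intro i; rw [hT, hT, Finset.sum_range_succ]
  have hT0 : T 0 = t 0 := by rw [hT]; simp
  have hTpos : ∀ i : ℕ, 0 < T i := by
    intro i; rw [hT]
    exact Finset.sum_pos (fun j _ => htpos' j) ⟨0, Finset.mem_range.mpr (Nat.succ_pos i)⟩
  have hTt : ∀ i : ℕ, t i ≤ T i := by
    intro i; rw [hT]
    exact Finset.single_le_sum (fun j _ => (htpos' j).le) (Finset.self_mem_range_succ i)
  have hTt2 : ∀ i : ℕ, t i ^ 2 ≤ T i := by
    intro i
    cases i with
    | zero => rw [hT0.symm] at ht0 ⊢; nlinarith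
    | succ n => exact htsq n
  have hLpos : ∀ i : ℕ, 0 < Lk i := by
    intro i
    induction i with
    | zero => exact hL0
    | succ n ih => exact lt_of_lt_of_le ih (hLmono n)
  set δ : ℕ → ℝ := fun i => (F (y i) + G (y i)) - (F ystar + G ystar) with hδdef
  have hδ : ∀ i, 0 ≤ δ i := fun i => sub_nonneg.mpr (hystar (y i))
  set v : ℕ → V := fun i => y (i+1) - w i with hvdef
  set m : ℕ → V := fun n => (y 0 - ystar) + ∑ i ∈ Finset.range n, t i • v i with hmdef
  have hm0 : m 0 = y 0 - ystar := by simp [hmdef]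
  have hmsucc : ∀ n, m (n+1) = m n + t n • v n := by
    intro n; simp only [hmdef, Finset.sum_range_succ]; abel
  -- the key invariant
  have hs : ∀ n, t n • m n = T n • w n - (T n - t n) • y n - t n • ystar := by
    intro n
    induction n with
    | zero => rw [hm0, hw0, hT0]; module
    | succ n ih =>
      have ha : t n ≠ 0 := ne_of_gt (htpos' n)
      have hAb : t n * T (n+1) ≠ 0 := by
        have := hTpos (n+1); positivity
      have hmn : m n = (t n)⁻¹ • (T n • w n - (T n - t n) • y n - t n • ystar) := by
        rw [← ih, smul_smul, inv_mul_cancel₀ ha, one_smul]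
      have hden : t n * (T n + t (n+1)) ≠ 0 := by rw [← hTsucc n]; exact hAb
      rw [hmsucc n, hmn, hw n, hTsucc n]
      simp only [hvdef]
      have hden2 : T n + t (n+1) ≠ 0 := by
        have := hTpos n; have := htpos' (n+1); positivity
      match_scalars <;> field_simp <;> ring
  -- per-step inequality
  have hstep : ∀ n, Lk (n+1) / 2 * ((T n - t n^2) * ‖v n‖^2)
      + Lk (n+1) / 2 * (‖m (n+1)‖^2 - ‖m n‖^2)
      ≤ (T n - t n) * δ n - T n * δ (n+1) := by
    intro n
    set L := Lk (n+1) with hLdef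
    have hLp : 0 < L := hLpos (n+1)
    have hmin : IsMinOn (fun z => F (w n) + ⟪z - w n, F' (w n)⟫
        + L / 2 * ‖z - w n‖^2 + G z) Set.univ (y (n+1)) := by
      rw [hy n]; exact hP L hLp (w n)
    have hd : F (y (n+1)) + G (y (n+1)) ≤ F (w n) + ⟪y (n+1) - w n, F' (w n)⟫
        + L / 2 * ‖y (n+1) - w n‖^2 + G (y (n+1)) := by
      rw [hy n]; exact hdesc n
    have P1 := prox_ineq hF hF' hG hmin hd (y n)
    have P2 := prox_ineq hF hF' hG hmin hd ystar
    have hvn : y (n+1) - w n = v n := rfl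
    rw [hvn] at P1 P2
    have hin : (T n - t n) * ⟪w n - y n, v n⟫ + t n * ⟪w n - ystar, v n⟫
        = t n * ⟪m n, v n⟫ := by
      rw [← real_inner_smul_left, ← real_inner_smul_left, ← real_inner_smul_left,
        ← inner_add_left, hs n]
      congr 1
      module
    have hsq : ‖m (n+1)‖^2 = ‖m n‖^2 + 2 * (t n * ⟪m n, v n⟫) + t n^2 * ‖v n‖^2 := by
      rw [hmsucc n, norm_add_sq_real, real_inner_smul_right, norm_smul]
      simp only [Real.norm_eq_abs, mul_pow, sq_abs]
      try ring
    have H1 := mul_le_mul_of_nonneg_left P1 (sub_nonneg.mpr (hTt n))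
    have H2 := mul_le_mul_of_nonneg_left P2 (htpos' n).le
    have hdel1 : (F (y n) + G (y n)) - (F (y (n+1)) + G (y (n+1))) = δ n - δ (n+1) := by
      simp only [hδdef]; ring
    have hdel2 : (F ystar + G ystar) - (F (y (n+1)) + G (y (n+1))) = -δ (n+1) := by
      simp only [hδdef]; ring
    rw [hdel1] at H1
    rw [hdel2] at H2
    have hinL : L * ((T n - t n) * ⟪w n - y n, v n⟫ + t n * ⟪w n - ystar, v n⟫)
        = L * (t n * ⟪m n, v n⟫) := by rw [hin]
    have hsqL : L/2 * ‖m (n+1)‖^2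
        = L/2 * ‖m n‖^2 + L * (t n * ⟪m n, v n⟫) + L/2 * (t n^2 * ‖v n‖^2) := by
      rw [hsq]; ring
    linarith [H1, H2, hinL, hsqL]
  -- energy decrease
  set E : ℕ → ℝ := fun n => (T n - t n) / (Lk n) * δ n + ‖m n‖^2 / 2 with hEdef
  have hEnn : ∀ n, 0 ≤ E n := by
    intro n
    have h1 : 0 ≤ (T n - t n) / (Lk n) * δ n :=
      mul_nonneg (div_nonneg (sub_nonneg.mpr (hTt n)) (hLpos n).le) (hδ n)
    have h2 : 0 ≤ ‖m n‖^2 / 2 := by positivity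
    simp only [hEdef]; linarith
  have hEstep : ∀ n, E (n+1) + (T n - t n^2) * ‖v n‖^2 / 2 ≤ E n := by
    intro n
    have hLp : 0 < Lk (n+1) := hLpos (n+1)
    have h3 := hstep n
    have key1 : (T n - t n^2) * ‖v n‖^2 / 2 + ‖m (n+1)‖^2 / 2 - ‖m n‖^2 / 2
        ≤ (T n - t n) / Lk (n+1) * δ n - T n / Lk (n+1) * δ (n+1) := by
      rw [div_mul_eq_mul_div, div_mul_eq_mul_div, div_sub_div_same, le_div_iff₀ hLp]
      nlinarith [h3]
    have key3 : (T n - t n) / Lk (n+1) * δ n ≤ (T n - t n) / Lk n * δ n := by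
      apply mul_le_mul_of_nonneg_right _ (hδ n)
      apply div_le_div_of_nonneg_left (sub_nonneg.mpr (hTt n)) (hLpos n) (hLmono n)
    have hTT : T (n+1) - t (n+1) = T n := by rw [hTsucc n]; ring
    simp only [hEdef, hTT]
    linarith [key1, key3]
  -- telescoping sum
  have hsumE : ∀ K, ∑ i ∈ Finset.range K, (T i - t i^2) * ‖v i‖^2 / 2 ≤ E 0 - E K := by
    intro K
    induction K with
    | zero => simp
    | succ n ih =>
      rw [Finset.sum_range_succ]
      have := hEstep n
      linarith
  have hE0 : E 0 = ‖y 0 - ystar‖^2 / 2 := by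
    simp only [hEdef, hm0, hT0, sub_self, zero_div, zero_mul, zero_add]
  -- conclusion
  set S := ∑ i ∈ Finset.range k, (T i - t i ^ 2) with hSdef
  set M := (Finset.Icc 1 k).inf' (Finset.nonempty_Icc.mpr hk)
    (fun i => ‖y i - w (i-1)‖) with hMdef
  have hM0 : 0 ≤ M := by
    rw [hMdef]
    apply Finset.le_inf'
    intro i _
    exact norm_nonneg _
  have hMle : ∀ i ∈ Finset.range k, M ≤ ‖v i‖ := by
    intro i hi
    have hmem : i + 1 ∈ Finset.Icc 1 k := by
      rw [Finset.mem_range] at hi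
      exact Finset.mem_Icc.mpr ⟨Nat.succ_le_succ (Nat.zero_le i), hi⟩
    exact Finset.inf'_le (fun j => ‖y j - w (j-1)‖) hmem
  have hsum2 : M^2 * S ≤ ‖y 0 - ystar‖^2 := by
    have h1 : ∑ i ∈ Finset.range k, (T i - t i^2) * M^2
        ≤ ∑ i ∈ Finset.range k, (T i - t i^2) * ‖v i‖^2 := by
      apply Finset.sum_le_sum
      intro i hi
      have hnn : 0 ≤ T i - t i^2 := sub_nonneg.mpr (hTt2 i)
      have h2 := hMle i hi
      have h3 : M^2 ≤ ‖v i‖^2 := by nlinarith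
      exact mul_le_mul_of_nonneg_left h3 hnn
    have h2 := hsumE k
    rw [hE0] at h2
    have h4 : ∑ i ∈ Finset.range k, (T i - t i^2) * ‖v i‖^2 / 2
        = (∑ i ∈ Finset.range k, (T i - t i^2) * ‖v i‖^2) / 2 := by
      rw [← Finset.sum_div]
    have h5 : ∑ i ∈ Finset.range k, (T i - t i^2) * M^2 = S * M^2 := by
      rw [← Finset.sum_mul]
    have h6 := hEnn k
    rw [h4] at h2
    have hB : ∑ i ∈ Finset.range k, (T i - t i^2) * ‖v i‖^2 ≤ ‖y 0 - ystar‖^2 := by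
      generalize hA : (∑ i ∈ Finset.range k, (T i - t i^2) * ‖v i‖^2) = Aa at h2 ⊢
      clear_value E δ v m S M
      linarith [h2, h6]
    calc M^2 * S = S * M^2 := mul_comm _ _
      _ = ∑ i ∈ Finset.range k, (T i - t i^2) * M^2 := h5.symm
      _ ≤ ∑ i ∈ Finset.range k, (T i - t i^2) * ‖v i‖^2 := h1
      _ ≤ ‖y 0 - ystar‖^2 := hB
  have hM2 : M^2 ≤ ‖y 0 - ystar‖^2 / S := (le_div_iff₀ hsum).mpr hsum2
  calc M = Real.sqrt (M^2) := (Real.sqrt_sq hM0).symm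
    _ ≤ Real.sqrt (‖y 0 - ystar‖^2 / S) := Real.sqrt_le_sqrt hM2
    _ = Real.sqrt (‖y 0 - ystar‖^2) / Real.sqrt S := Real.sqrt_div (sq_nonneg _) S
    _ = ‖y 0 - ystar‖ / Real.sqrt S := by rw [Real.sqrt_sq (norm_nonneg _)]
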